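/- arXiv:1010.6206 — 4 statements merged into one kernel-verified Lean document; each statement's English description precedes it below -/
import Mathlib

section
/- If a positive odd integer a satisfies f^k(a) = a for some k ≥ 1, and n_i = v_2(3 f^{i-1}(a)+1) for i = 1,...,k, then 3^k < 2^{n_1+...+n_k}, and consequently 2^{n_1+...+n_k} ≥ 3^k + 1. -/
/-- Shortcut Collatz map on odd integers: f(a) = (3a+1)/2^(v2(3a+1)). -/
def collatzOdd (a : ℤ) : ℤ := (3 * a + 1) / 2 ^ ((3 * a + 1).natAbs.factorization 2)

/-- n (a) i = v2(3 * f^[i](a) + 1), i.e. the exponent n_{i+1} in the paper. -/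
def collatzExp (a : ℤ) (i : ℕ) : ℕ :=
  (3 * collatzOdd^[i] a + 1).natAbs.factorization 2

lemma collatzOdd_step (a : ℤ) (hpos : 0 < a) :
    2 ^ ((3 * a + 1).natAbs.factorization 2) * collatzOdd a = 3 * a + 1 ∧
      0 < collatzOdd a ∧ Odd (collatzOdd a) := by
  set v := (3 * a + 1).natAbs.factorization 2 with hv
  have hN : (3 * a + 1).natAbs ≠ 0 := by
    have : (0:ℤ) < 3 * a + 1 := by linarith
    simpa [Int.natAbs_eq_zero] using this.ne'
  have hdvdN : 2 ^ v ∣ (3 * a + 1).natAbs := Nat.ordProj_dvd _ 2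
  have hdvd : (2:ℤ) ^ v ∣ 3 * a + 1 := by
    have := Int.natAbs_dvd.mpr (Int.natCast_dvd_natCast.mpr hdvdN)
    simpa using Int.natCast_dvd_natCast.mpr hdvdN |>.trans (Int.natAbs_dvd.mp dvd_rfl)
  have heq : 2 ^ v * collatzOdd a = 3 * a + 1 := by
    rw [collatzOdd, ← hv]
    exact Int.mul_ediv_cancel' hdvd
  have hposq : 0 < collatzOdd a := by
    have h1 : (0:ℤ) < 3 * a + 1 := by linarith
    have h2 : (0:ℤ) < 2 ^ v := by positivity
    nlinarith [heq]
  refine ⟨heq, hposq, ?_⟩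
  -- natAbs of quotient equals ord_compl
  have hnat : 2 ^ v * (collatzOdd a).natAbs = (3 * a + 1).natAbs := by
    have := congrArg Int.natAbs heq
    simpa [Int.natAbs_mul, Int.natAbs_pow] using this
  have hq : (collatzOdd a).natAbs = (3 * a + 1).natAbs / 2 ^ v := by
    rw [← hnat, Nat.mul_div_cancel_left _ (pow_pos two_pos v)]
  have hnd : ¬ 2 ∣ (3 * a + 1).natAbs / 2 ^ v :=
    Nat.not_dvd_ordCompl Nat.prime_two hN
  have : Odd (collatzOdd a).natAbs := by
    rw [hq, Nat.odd_iff]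
    omega
  exact Int.natAbs_odd.mp this

theorem collatzOdd_cycle_pow_lt (a : ℤ) (ha : Odd a) (hpos : 0 < a) (k : ℕ) (hk : 1 ≤ k)
    (hcyc : collatzOdd^[k] a = a) :
    (3 : ℤ) ^ k < 2 ^ (∑ i ∈ Finset.range k, collatzExp a i) ∧
      (3 : ℤ) ^ k + 1 ≤ 2 ^ (∑ i ∈ Finset.range k, collatzExp a i) := by
  set g : ℕ → ℤ := fun i => collatzOdd^[i] a with hg
  have hgpos : ∀ i, 0 < g i := by
    intro i
    induction i with
    | zero => simpa [hg] using hpos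
    | succ n ih =>
      have := (collatzOdd_step (g n) ih).2.1
      simpa [hg, Function.iterate_succ_apply'] using this
  have hstep : ∀ i, 2 ^ (collatzExp a i) * g (i + 1) = 3 * g i + 1 := by
    intro i
    have := (collatzOdd_step (g i) (hgpos i)).1
    simpa [hg, collatzExp, Function.iterate_succ_apply'] using this
  -- product of the step identity
  have hprod : (2:ℤ) ^ (∑ i ∈ Finset.range k, collatzExp a i) *
      ∏ i ∈ Finset.range k, g (i + 1) = ∏ i ∈ Finset.range k, (3 * g i + 1) := by
    rw [← Finset.prod_pow_eq_pow_sum]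
    rw [← Finset.prod_mul_distrib]
    exact Finset.prod_congr rfl fun i _ => hstep i
  -- shift: product of g (i+1) equals product of g i, using the cycle
  have hshift : ∏ i ∈ Finset.range k, g (i + 1) = ∏ i ∈ Finset.range k, g i := by
    have h1 : ∏ i ∈ Finset.range (k + 1), g i =
        (∏ i ∈ Finset.range k, g (i + 1)) * g 0 := Finset.prod_range_succ' g k
    have h2 : ∏ i ∈ Finset.range (k + 1), g i =
        (∏ i ∈ Finset.range k, g i) * g k := Finset.prod_range_succ g k
    have hgk : g k = g 0 := by simp [hg, hcyc]
    have h0 : g 0 ≠ 0 := (hgpos 0).ne'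
    have := h1.symm.trans h2
    rw [hgk] at this
    exact mul_right_cancel₀ h0 this
  have hP : (0:ℤ) < ∏ i ∈ Finset.range k, g i :=
    Finset.prod_pos fun i _ => hgpos i
  have hlt : ∏ i ∈ Finset.range k, (3 * g i) <
      ∏ i ∈ Finset.range k, (3 * g i + 1) := by
    refine Finset.prod_lt_prod_of_nonempty (fun i _ => by have := hgpos i; linarith) (fun i _ => by linarith)
      ?_
    exact Finset.nonempty_range_iff.mpr (by omega)
  have h3k : ∏ i ∈ Finset.range k, (3 * g i) =
      3 ^ k * ∏ i ∈ Finset.range k, g i := by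
    rw [Finset.prod_mul_distrib, Finset.prod_const, Finset.card_range]
  have key : (3:ℤ) ^ k * ∏ i ∈ Finset.range k, g i <
      2 ^ (∑ i ∈ Finset.range k, collatzExp a i) * ∏ i ∈ Finset.range k, g i := by
    rw [← h3k]
    calc ∏ i ∈ Finset.range k, (3 * g i) < ∏ i ∈ Finset.range k, (3 * g i + 1) := hlt
    _ = 2 ^ (∑ i ∈ Finset.range k, collatzExp a i) * ∏ i ∈ Finset.range k, g i := by
        rw [← hprod, hshift]
  have hmain : (3:ℤ) ^ k < 2 ^ (∑ i ∈ Finset.range k, collatzExp a i) :=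
    lt_of_mul_lt_mul_right key hP.le
  exact ⟨hmain, by omega⟩
end

section
/- Closed-form for the minimum of a cycle: if a is a positive odd integer with f^k(a) = a and n_i = v_2(3 f^{i-1}(a)+1), then a · (2^{n_1+...+n_k} − 3^k) = \sum_{j=0}^{k-1} 3^{k-1-j} 2^{n_1+...+n_j} (empty exponent sum equals 0 for j = 0). -/
lemma collatzOdd_key (a : ℤ) (_ha : Odd a) (hpos : 0 < a) :
    Odd (collatzOdd a) ∧ 0 < collatzOdd a ∧
      (2:ℤ) ^ ((3 * a + 1).natAbs.factorization 2) * collatzOdd a = 3 * a + 1 := by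
  set m := (3 * a + 1).natAbs with hm
  have h1 : (0:ℤ) < 3 * a + 1 := by linarith
  have hmZ : (m : ℤ) = 3 * a + 1 := Int.natAbs_of_nonneg h1.le
  have hm0 : m ≠ 0 := by
    intro h; rw [h] at hmZ; simp at hmZ; linarith
  have hco : collatzOdd a = ((m / 2 ^ (m.factorization 2) : ℕ) : ℤ) := by
    rw [collatzOdd, ← hm, ← hmZ]
    push_cast [Int.natCast_ediv]
    ring_nf
  have hoddn : Odd (m / 2 ^ (m.factorization 2)) := by
    rw [Nat.odd_iff]
    exact Nat.two_dvd_ne_zero.mp (Nat.not_dvd_ordCompl Nat.prime_two hm0)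
  refine ⟨?_, ?_, ?_⟩
  · rw [hco]; exact_mod_cast hoddn
  · rw [hco]; exact_mod_cast Nat.ordCompl_pos 2 hm0
  · rw [hco, ← hmZ]
    exact_mod_cast Nat.ordProj_mul_ordCompl_eq_self m 2

lemma collatz_iter (a : ℤ) (ha : Odd a) (hpos : 0 < a) (j : ℕ) :
    Odd (collatzOdd^[j] a) ∧ 0 < collatzOdd^[j] a ∧
      (2:ℤ) ^ (∑ i ∈ Finset.range j, collatzExp a i) * collatzOdd^[j] a
        = 3 ^ j * a + ∑ i ∈ Finset.range j,
            3 ^ (j - 1 - i) * 2 ^ (∑ t ∈ Finset.range i, collatzExp a t) := by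
  induction j with
  | zero => simpa using ⟨ha, hpos⟩
  | succ j ih =>
    obtain ⟨hodd, hpos', heq⟩ := ih
    have key := collatzOdd_key _ hodd hpos'
    have hstep : (2:ℤ) ^ (collatzExp a j) * collatzOdd^[j+1] a
        = 3 * collatzOdd^[j] a + 1 := by
      rw [Function.iterate_succ_apply']
      exact key.2.2
    refine ⟨by rw [Function.iterate_succ_apply']; exact key.1,
      by rw [Function.iterate_succ_apply']; exact key.2.1, ?_⟩
    have hsum : (3:ℤ) * ∑ i ∈ Finset.range j,
          3 ^ (j - 1 - i) * 2 ^ (∑ t ∈ Finset.range i, collatzExp a t)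
        = ∑ i ∈ Finset.range j,
          3 ^ (j - i) * 2 ^ (∑ t ∈ Finset.range i, collatzExp a t) := by
      rw [Finset.mul_sum]
      refine Finset.sum_congr rfl fun i hi => ?_
      have hij : i < j := Finset.mem_range.mp hi
      have : j - i = (j - 1 - i) + 1 := by omega
      rw [this, pow_succ']
      ring
    calc (2:ℤ) ^ (∑ i ∈ Finset.range (j+1), collatzExp a i) * collatzOdd^[j+1] a
        = (2:ℤ) ^ (∑ i ∈ Finset.range j, collatzExp a i) *
            ((2:ℤ) ^ (collatzExp a j) * collatzOdd^[j+1] a) := by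
          rw [Finset.sum_range_succ, pow_add]; ring
      _ = (2:ℤ) ^ (∑ i ∈ Finset.range j, collatzExp a i) *
            (3 * collatzOdd^[j] a + 1) := by rw [hstep]
      _ = 3 * ((2:ℤ) ^ (∑ i ∈ Finset.range j, collatzExp a i) * collatzOdd^[j] a)
            + 2 ^ (∑ i ∈ Finset.range j, collatzExp a i) := by ring
      _ = 3 ^ (j+1) * a + ∑ i ∈ Finset.range (j+1),
            3 ^ (j + 1 - 1 - i) * 2 ^ (∑ t ∈ Finset.range i, collatzExp a t) := by
          rw [heq, Finset.sum_range_succ]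
          simp only [Nat.add_sub_cancel]
          rw [mul_add, hsum]
          have : j - j = 0 := by omega
          rw [this]
          ring

theorem collatzOdd_cycle_closed_form (a : ℤ) (ha : Odd a) (hpos : 0 < a) (k : ℕ) (hk : 1 ≤ k)
    (hcyc : collatzOdd^[k] a = a) :
    a * ((2 : ℤ) ^ (∑ i ∈ Finset.range k, collatzExp a i) - 3 ^ k) =
      ∑ j ∈ Finset.range k,
        3 ^ (k - 1 - j) * 2 ^ (∑ i ∈ Finset.range j, collatzExp a i) := by
  have h := (collatz_iter a ha hpos k).2.2
  rw [hcyc] at h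
  linarith [h]
end

section
/- Main theorem (bound on minimum of a positive Collatz cycle): if a_min is the minimum element of a cycle of the shortcut Collatz map f consisting of positive odd integers and having length k ≥ 2, then a_min < k(3^k + 1)/4, and in particular a_min < k·3^{k−1}. -/
lemma collatzOdd_spec (a : ℤ) (ha : Odd a) (hpos : 0 < a) :
    (2:ℤ) ^ ((3 * a + 1).natAbs.factorization 2) * collatzOdd a = 3 * a + 1 ∧
    Odd (collatzOdd a) ∧ 0 < collatzOdd a ∧ 1 ≤ (3 * a + 1).natAbs.factorization 2 := by
  set m := (3 * a + 1).natAbs with hm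
  have h1 : (0:ℤ) < 3 * a + 1 := by linarith
  have hcast : (m : ℤ) = 3 * a + 1 := Int.natAbs_of_nonneg h1.le
  have hm0 : m ≠ 0 := by
    intro h; rw [h] at hcast; simp at hcast; omega
  have heven : 2 ∣ m := by
    obtain ⟨b, hb⟩ := ha
    have : (3 * a + 1) = 2 * (3 * b + 2) := by rw [hb]; ring
    have : (2:ℤ) ∣ (m:ℤ) := ⟨3*b+2, by rw [hcast, this]⟩
    exact_mod_cast this
  set n := m.factorization 2 with hn
  have hdvd : 2 ^ n ∣ m := Nat.ordProj_dvd m 2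
  have hq : collatzOdd a = ((m / 2 ^ n : ℕ) : ℤ) := by
    unfold collatzOdd
    rw [← hcast]
    push_cast [Int.natCast_div]
    simp [hn]
  have hodd : Odd (m / 2 ^ n) := by
    have h2 : ¬ 2 ∣ (m / 2 ^ n) := Nat.not_dvd_ordCompl Nat.prime_two hm0
    rw [Nat.odd_iff]
    omega
  have hpos' : 0 < m / 2 ^ n := Nat.ordCompl_pos 2 hm0
  have hmul : 2 ^ n * (m / 2 ^ n) = m := Nat.ordProj_mul_ordCompl_eq_self m 2
  refine ⟨?_, ?_, ?_, ?_⟩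
  · rw [hq, ← hcast]; exact_mod_cast hmul
  · rw [hq]; exact Int.odd_coe_nat _ |>.mpr hodd
  · rw [hq]; exact_mod_cast hpos'
  · exact Nat.Prime.factorization_pos_of_dvd Nat.prime_two hm0 heven

lemma three_pow_mod_eight (m : ℕ) : 3 ^ m % 8 = 1 ∨ 3 ^ m % 8 = 3 := by
  induction m with
  | zero => left; rfl
  | succ m ih =>
    rw [pow_succ, Nat.mul_mod]
    rcases ih with h | h <;> rw [h] <;> simp

set_option maxHeartbeats 2000000 in
theorem collatzOdd_min_bound (a : ℤ) (ha : Odd a) (hpos : 0 < a) (k : ℕ) (hk : 2 ≤ k)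
    (hcyc : collatzOdd^[k] a = a)
    (hmin_period : ∀ i : ℕ, 0 < i → i < k → collatzOdd^[i] a ≠ a)
    (hmin : ∀ i : ℕ, i < k → a ≤ collatzOdd^[i] a) :
    (a : ℚ) < k * (3 ^ k + 1) / 4 ∧ (a : ℚ) < k * 3 ^ (k - 1) := by
  have key : ∀ i : ℕ, Odd (collatzOdd^[i] a) ∧ 0 < collatzOdd^[i] a := by
    intro i; induction i with
    | zero => exact ⟨ha, hpos⟩
    | succ i ih =>
      rw [Function.iterate_succ_apply']
      exact ⟨(collatzOdd_spec _ ih.1 ih.2).2.1, (collatzOdd_spec _ ih.1 ih.2).2.2.1⟩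
  have hrec : ∀ i : ℕ, (2:ℤ) ^ (collatzExp a i) * collatzOdd^[i+1] a
      = 3 * collatzOdd^[i] a + 1 := by
    intro i
    rw [Function.iterate_succ_apply']
    exact (collatzOdd_spec _ (key i).1 (key i).2).1
  have hexp1 : ∀ i, 1 ≤ collatzExp a i :=
    fun i => (collatzOdd_spec _ (key i).1 (key i).2).2.2.2
  -- rational setup
  set q : ℕ → ℚ := fun i => ((collatzOdd^[i] a : ℤ) : ℚ) with hqdef
  set s : ℕ → ℕ := fun i => ∑ j ∈ Finset.range i, collatzExp a j with hsdef
  set X : ℕ → ℚ := fun i => 2 ^ (s i) / 3 ^ i with hXdef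
  have hq_pos : ∀ i, 0 < q i := by
    intro i; simp only [hqdef]; exact_mod_cast (key i).2
  have hq0_pos : 0 < q 0 := hq_pos 0
  have hq0_ne : q 0 ≠ 0 := ne_of_gt hq0_pos
  have hX_pos : ∀ i, 0 < X i := by
    intro i; simp only [hXdef]; positivity
  have hqrec : ∀ i, (2:ℚ) ^ (collatzExp a i) * q (i+1) = 3 * q i + 1 := by
    intro i; simp only [hqdef]; exact_mod_cast hrec i
  have hY : ∀ i, q i * X i = q 0 + (1/3) * ∑ j ∈ Finset.range i, X j := by
    intro i; induction i with
    | zero => simp [hXdef, hsdef]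
    | succ i ih =>
      have hs : s (i+1) = s i + collatzExp a i := Finset.sum_range_succ _ _
      have step : q (i+1) * X (i+1) = q i * X i + (1/3) * X i := by
        simp only [hXdef, hs, pow_add, pow_succ]
        have h2 : q (i+1) * (2 ^ s i * 2 ^ collatzExp a i / (3 ^ i * 3))
            = (2 ^ collatzExp a i * q (i+1)) * (2 ^ s i / (3 ^ i * 3)) := by ring
        rw [h2, hqrec i]
        ring
      rw [step, ih, Finset.sum_range_succ]
      ring
  have hS_nonneg : ∀ i, (0:ℚ) ≤ ∑ j ∈ Finset.range i, X j :=
    fun i => Finset.sum_nonneg fun j _ => (hX_pos j).le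
  have hqk : q k = q 0 := by simp [hqdef, hcyc]
  have hqge : ∀ i, i ≤ k → q 0 ≤ q i := by
    intro i hi
    rcases eq_or_lt_of_le hi with h | h
    · rw [h, hqk]
    · simp only [hqdef, Function.iterate_zero_apply]
      exact_mod_cast hmin i h
  have hqgt : ∀ i, 0 < i → i < k → q 0 < q i := by
    intro i h0 h1
    refine lt_of_le_of_ne (hqge i h1.le) ?_
    intro h
    apply hmin_period i h0 h1
    have h' : ((a : ℤ) : ℚ) = ((collatzOdd^[i] a : ℤ) : ℚ) := by
      simpa [hqdef, Function.iterate_zero_apply] using h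
    exact_mod_cast h'.symm
  set e : ℚ := 1 / (3 * q 0) with hedef
  have he_pos : 0 < e := by rw [hedef]; positivity
  have hq0e : q 0 * e = 1/3 := by rw [hedef]; field_simp
  have hXle : ∀ i, i ≤ k → X i ≤ 1 + e * ∑ j ∈ Finset.range i, X j := by
    intro i hi
    have h1 : q 0 * (1 + e * ∑ j ∈ Finset.range i, X j)
        = q 0 + (1/3) * ∑ j ∈ Finset.range i, X j := by
      linear_combination (∑ j ∈ Finset.range i, X j) * hq0e
    have h2 : q 0 * X i ≤ q i * X i :=
      mul_le_mul_of_nonneg_right (hqge i hi) (hX_pos i).le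
    rw [hY i] at h2
    refine (mul_le_mul_iff_right₀ hq0_pos).mp ?_
    rw [h1]; exact h2
  have hXlt : ∀ i, 0 < i → i < k → X i < 1 + e * ∑ j ∈ Finset.range i, X j := by
    intro i h0 h1
    have h1' : q 0 * (1 + e * ∑ j ∈ Finset.range i, X j)
        = q 0 + (1/3) * ∑ j ∈ Finset.range i, X j := by
      linear_combination (∑ j ∈ Finset.range i, X j) * hq0e
    have h2 : q 0 * X i < q i * X i :=
      mul_lt_mul_of_pos_right (hqgt i h0 h1) (hX_pos i)
    rw [hY i] at h2
    refine (mul_lt_mul_iff_right₀ hq0_pos).mp ?_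
    rw [h1']; exact h2
  -- strict geometric bound at k
  have hgeom : e * ∑ j ∈ Finset.range k, X j < (1+e)^k - 1 := by
    have base : e * ∑ j ∈ Finset.range 2, X j < (1+e)^2 - 1 := by
      have hX0 : X 0 = 1 := by simp [hXdef, hsdef]
      have h1 := hXlt 1 one_pos (by omega)
      simp only [Finset.sum_range_succ, Finset.sum_range_zero, zero_add, hX0] at h1 ⊢
      nlinarith [he_pos]
    have step : ∀ i, 2 ≤ i → i < k →
        e * ∑ j ∈ Finset.range i, X j < (1+e)^i - 1 →
        e * ∑ j ∈ Finset.range (i+1), X j < (1+e)^(i+1) - 1 := by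
      intro i h2i hik ih
      have hXi := hXle i hik.le
      rw [Finset.sum_range_succ, mul_add]
      have hps : (1+e)^(i+1) = (1+e)^i * (1+e) := pow_succ _ _
      have ha' : e * X i ≤ e * (1 + e * ∑ j ∈ Finset.range i, X j) :=
        mul_le_mul_of_nonneg_left hXi he_pos.le
      have hb' : e * (e * ∑ j ∈ Finset.range i, X j) < e * ((1+e)^i - 1) :=
        mul_lt_mul_of_pos_left ih he_pos
      nlinarith [ih, ha', hb']
    -- induct from 2 to k
    have : ∀ j, 2 + j ≤ k → e * ∑ l ∈ Finset.range (2+j), X l < (1+e)^(2+j) - 1 := by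
      intro j
      induction j with
      | zero => intro _; exact base
      | succ j ih =>
        intro hj
        exact step (2+j) (by omega) (by omega) (ih (by omega))
    have h := this (k - 2) (by omega)
    have hkk : 2 + (k-2) = k := by omega
    rw [hkk] at h
    exact h
  -- key identity at k : X k = 1 + e * S
  set S : ℚ := ∑ j ∈ Finset.range k, X j with hSdef
  have hXk : X k = 1 + e * S := by
    have h := hY k
    rw [hqk] at h
    have h1 : q 0 * (1 + e * S) = q 0 + (1/3) * S := by
      linear_combination S * hq0e
    have : q 0 * X k = q 0 * (1 + e * S) := by rw [h, h1]
    exact mul_left_cancel₀ hq0_ne this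
  have hS_pos : 0 < S := by
    have : (0:ℚ) < X 0 := hX_pos 0
    have h2 : X 0 ≤ S := by
      apply Finset.single_le_sum (f := X) (fun j _ => (hX_pos j).le)
      simp; omega
    linarith
  set N : ℕ := s k with hNdef
  have hXk_lt : X k < (1+e)^k := by
    rw [hXk]; linarith [hgeom]
  have hXk_gt : 1 < X k := by
    rw [hXk]; nlinarith [he_pos, hS_pos]
  have h2N_lt : (2:ℚ)^N < 3^k * (1+e)^k := by
    have h3 : (0:ℚ) < 3^k := by positivity
    have : X k = 2^N / 3^k := rfl
    rw [this] at hXk_lt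
    calc (2:ℚ)^N = (2^N / 3^k) * 3^k := by field_simp
    _ < (1+e)^k * 3^k := by exact mul_lt_mul_of_pos_right hXk_lt h3
    _ = 3^k * (1+e)^k := by ring
  have h2N_gt_nat : 3^k < 2^N := by
    have h3 : (0:ℚ) < 3^k := by positivity
    have : X k = 2^N / 3^k := rfl
    rw [this] at hXk_gt
    have : (3:ℚ)^k < 2^N := by
      calc (3:ℚ)^k = 1 * 3^k := by ring
      _ < (2^N / 3^k) * 3^k := by exact mul_lt_mul_of_pos_right hXk_gt h3
      _ = 2^N := by field_simp
    exact_mod_cast this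
  -- number theory: 2^N ≥ 3^k + 5
  have hge5 : 3^k + 5 ≤ 2^N := by
    have hNk : k ≤ N := by
      calc k = ∑ j ∈ Finset.range k, 1 := by simp
      _ ≤ ∑ j ∈ Finset.range k, collatzExp a j := Finset.sum_le_sum fun j _ => hexp1 j
    have h2e : 2^N % 2 = 0 := by
      have h' : 2^N = 2 * 2^(N-1) := by
        rw [← pow_succ']
        congr 1
        omega
      omega
    have h3o : 3^k % 2 = 1 := by
      rw [Nat.pow_mod]; simp
    have h3d : 3^k % 3 = 0 := by
      have : (3:ℕ) ∣ 3^k := dvd_pow_self 3 (by omega)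
      omega
    have h2nd : ¬ (3 ∣ 2^N) := by
      intro h
      have := Nat.Prime.dvd_of_dvd_pow Nat.prime_three h
      norm_num at this
    have hne1 : 2^N ≠ 3^k + 1 := by
      intro h
      have h9 : 9 ≤ 3^k := by
        calc (9:ℕ) = 3^2 := by norm_num
        _ ≤ 3^k := Nat.pow_le_pow_right (by norm_num) hk
      have hN4 : 4 ≤ N := by
        by_contra hc
        push_neg at hc
        have : 2^N ≤ 2^3 := Nat.pow_le_pow_right (by norm_num) (by omega)
        omega
      have h8 : 2^N % 8 = 0 := by
        have : (8:ℕ) ∣ 2^N := by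
          calc (8:ℕ) = 2^3 := by norm_num
          _ ∣ 2^N := pow_dvd_pow 2 (by omega)
        omega
      have := three_pow_mod_eight k
      omega
    have h2nd' : ¬ (3 ∣ (2^N - 3^k)) := by
      intro h
      have : (3:ℕ) ∣ 2^N := by
        have := Nat.dvd_sub h (dvd_refl 3)
        have h3k : (3:ℕ) ∣ 3^k := dvd_pow_self 3 (by omega)
        omega
      exact h2nd this
    omega
  have hge5Q : (3:ℚ)^k + 5 ≤ 2^N := by exact_mod_cast hge5
  -- final inequality
  have hq0a : q 0 = (a:ℚ) := by simp [hqdef]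
  have main : (a : ℚ) < k * (3 ^ k + 1) / 4 := by
    by_contra hcon
    push_neg at hcon
    rw [← hq0a] at hcon
    set K : ℚ := (k:ℚ) with hKdef
    set P : ℚ := (3:ℚ)^k with hPdef
    have hK2 : (2:ℚ) ≤ K := by rw [hKdef]; exact_mod_cast hk
    have hP9 : (9:ℚ) ≤ P := by
      have : (3:ℚ)^2 ≤ 3^k := pow_le_pow_right₀ (by norm_num) hk
      norm_num at this; simpa [hPdef] using this
    have hq0big : K * (P + 1) / 4 ≤ q 0 := hcon
    have he1 : e ≤ 1 := by
      rw [hedef]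
      rw [div_le_one (by positivity)]
      nlinarith
    have hKe : K * e ≤ 4 / (3 * (P + 1)) := by
      rw [hedef]
      have h1 : K * (1 / (3 * q 0)) = K / (3 * q 0) := by ring
      rw [h1, div_le_div_iff₀ (by positivity) (by positivity)]
      nlinarith [hq0big]
    have hKe1 : K * e < 1 := by
      have : 4 / (3 * (P+1)) < 1 := by
        rw [div_lt_one (by positivity)]; nlinarith
      linarith
    have h3 : 1 - K * e ≤ (1 - e)^k := by
      have h := one_add_mul_le_pow (a := -e) (by linarith : (-2:ℚ) ≤ -e) k
      have heq : (1:ℚ) + -e = 1 - e := by ring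
      rw [heq] at h
      calc 1 - K*e = 1 + (k:ℚ) * -e := by rw [hKdef]; ring
      _ ≤ (1-e)^k := h
    have h4 : (1+e)^k * (1-e)^k ≤ 1 := by
      have hee : (1+e) * (1-e) = 1 - e^2 := by ring
      rw [← mul_pow, hee]
      have ha0 : (0:ℚ) ≤ 1 - e^2 := by nlinarith [he_pos, he1]
      have ha1 : (1:ℚ) - e^2 ≤ 1 := by nlinarith [he_pos]
      exact pow_le_one₀ ha0 ha1
    have h5 : (1+e)^k * (1 - K*e) ≤ 1 := by
      have hp : (0:ℚ) ≤ (1+e)^k := by positivity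
      calc (1+e)^k * (1 - K*e) ≤ (1+e)^k * (1-e)^k := by
            exact mul_le_mul_of_nonneg_left h3 hp
      _ ≤ 1 := h4
    -- P + 5 ≤ 2^N < P * (1+e)^k
    have h6 : P + 5 < P * (1+e)^k := lt_of_le_of_lt hge5Q h2N_lt
    have h7 : (P + 5) * (1 - K*e) < P := by
      have hp : (0:ℚ) < 1 - K*e := by linarith
      have := mul_lt_mul_of_pos_right h6 hp
      calc (P+5) * (1-K*e) < P * (1+e)^k * (1-K*e) := this
      _ = P * ((1+e)^k * (1-K*e)) := by ring
      _ ≤ P * 1 := by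
          apply mul_le_mul_of_nonneg_left h5 (by positivity)
      _ = P := by ring
    have h8 : 5 < K * e * (P + 5) := by nlinarith
    have h9 : K * e * (P+5) ≤ 4 * (P+5) / (3 * (P+1)) := by
      rw [div_eq_mul_inv]
      have : K * e * (P+5) ≤ (4 / (3*(P+1))) * (P+5) :=
        mul_le_mul_of_nonneg_right hKe (by linarith)
      calc K * e * (P+5) ≤ (4 / (3*(P+1))) * (P+5) := this
      _ = 4 * (P+5) * (3*(P+1))⁻¹ := by ring
    have h10 : 4 * (P+5) / (3 * (P+1)) < 5 := by
      rw [div_lt_iff₀ (by positivity)]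
      nlinarith
    linarith
  refine ⟨main, lt_of_lt_of_le main ?_⟩
  have hk1 : k - 1 + 1 = k := by omega
  have h3k : (3:ℚ)^k = 3 * 3^(k-1) := by
    conv_lhs => rw [← hk1]
    rw [pow_succ]
    ring
  have h1le : (1:ℚ) ≤ 3^(k-1) := by
    calc (1:ℚ) = 3^0 := by norm_num
    _ ≤ 3^(k-1) := pow_le_pow_right₀ (by norm_num) (Nat.zero_le _)
  have hK0 : (0:ℚ) ≤ (k:ℚ) := by positivity
  rw [h3k]
  rw [div_le_iff₀ (by norm_num : (0:ℚ) < 4)]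
  nlinarith [mul_le_mul_of_nonneg_left h1le hK0]
end

section
/- Search bound consequence: if there exists a cycle of the shortcut Collatz map f of length k ≥ 2 among positive odd integers, then there exists a positive odd integer a < k·3^{k−1} with f^k(a) = a and f^i(a) ≠ a for 0 < i < k. -/
lemma collatz_key (a : ℤ) (ha : 0 < a) :
    2 ^ ((3*a+1).natAbs.factorization 2) * collatzOdd a = 3*a+1 ∧
    0 < collatzOdd a ∧ Odd (collatzOdd a) := by
  have hbpos : (0:ℤ) < 3*a+1 := by linarith
  set b : ℕ := (3*a+1).natAbs with hb
  have hcast : (b : ℤ) = 3*a+1 := Int.natAbs_of_nonneg hbpos.le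
  have hb0 : b ≠ 0 := by
    intro h; rw [h] at hcast; simp at hcast; omega
  set n : ℕ := b.factorization 2 with hn
  have hdvd : 2^n ∣ b := Nat.ordProj_dvd b 2
  have hco : collatzOdd a = ((b / 2^n : ℕ) : ℤ) := by
    rw [collatzOdd, ← hcast]
    simp only [Int.natAbs_natCast, Int.natCast_div]
    push_cast
    ring_nf
    rw [← hn]
  have hmul : 2^n * (b / 2^n) = b := Nat.ordProj_mul_ordCompl_eq_self b 2
  have hpos : 0 < b / 2^n := Nat.ordCompl_pos 2 hb0
  have hoddc : ¬ 2 ∣ b / 2^n := Nat.not_dvd_ordCompl Nat.prime_two hb0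
  refine ⟨?_, ?_, ?_⟩
  · rw [hco, ← hcast]
    exact_mod_cast congrArg (Nat.cast : ℕ → ℤ) hmul
  · rw [hco]; exact_mod_cast hpos
  · rw [hco, Int.odd_coe_nat, Nat.odd_iff]
    omega

lemma collatz_iter_pos (a : ℤ) (ha : 0 < a) (hodd : Odd a) (i : ℕ) :
    0 < collatzOdd^[i] a ∧ Odd (collatzOdd^[i] a) := by
  induction i with
  | zero => exact ⟨ha, hodd⟩
  | succ i ih =>
    rw [Function.iterate_succ_apply']
    exact ⟨(collatz_key _ ih.1).2.1, (collatz_key _ ih.1).2.2⟩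

lemma collatz_iter_mod (a : ℤ) (k : ℕ) (hcyc : collatzOdd^[k] a = a) (t : ℕ) :
    collatzOdd^[t] a = collatzOdd^[t % k] a := by
  conv_lhs => rw [← Nat.mod_add_div t k]
  rw [Function.iterate_add_apply, Function.iterate_mul,
    Function.iterate_fixed hcyc (t / k)]

lemma pow_ineq (m : ℤ) (hm : 0 ≤ m) : ∀ k : ℕ, (3*m+1)^k * (3*m - k) ≤ (3*m)^k * (3*m) := by
  intro k
  induction k with
  | zero => simp
  | succ k ih =>
    have h1 : (3*m+1)^(k+1) * (3*m - (k+1:ℕ)) = (3*m+1)^k * ((3*m+1)*(3*m - k) - (3*m+1)) := by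
      push_cast; ring
    have hnn : (0:ℤ) ≤ (3*m+1)^k := by positivity
    have h2 : (3*m+1)*(3*m - k) - (3*m+1) ≤ (3*m)*(3*m - k) := by nlinarith
    calc (3*m+1)^(k+1) * (3*m - (k+1:ℕ))
        = (3*m+1)^k * ((3*m+1)*(3*m - k) - (3*m+1)) := h1
      _ ≤ (3*m+1)^k * ((3*m)*(3*m - k)) := mul_le_mul_of_nonneg_left h2 hnn
      _ = (3*m) * ((3*m+1)^k * (3*m - k)) := by ring
      _ ≤ (3*m) * ((3*m)^k * (3*m)) := mul_le_mul_of_nonneg_left ih (by linarith)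
      _ = (3*m)^(k+1) * (3*m) := by ring

set_option maxHeartbeats 1000000 in
theorem collatzOdd_search_bound (k : ℕ) (hk : 2 ≤ k)
    (hex : ∃ a : ℤ, 0 < a ∧ Odd a ∧ collatzOdd^[k] a = a ∧
      ∀ i : ℕ, 0 < i → i < k → collatzOdd^[i] a ≠ a) :
    ∃ a : ℤ, 0 < a ∧ Odd a ∧ a < k * 3 ^ (k - 1) ∧ collatzOdd^[k] a = a ∧
      ∀ i : ℕ, 0 < i → i < k → collatzOdd^[i] a ≠ a := by
  obtain ⟨a, ha, hodd, hcyc, hmin⟩ := hex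
  have hk0 : 0 < k := by omega
  obtain ⟨i0, hi0mem, hi0min⟩ := Finset.exists_min_image (Finset.range k)
    (fun i => collatzOdd^[i] a) ⟨0, Finset.mem_range.mpr hk0⟩
  set m : ℤ := collatzOdd^[i0] a with hm
  have hi0k : i0 < k := Finset.mem_range.mp hi0mem
  have hmpos : 0 < m := (collatz_iter_pos a ha hodd i0).1
  have hmodd : Odd m := (collatz_iter_pos a ha hodd i0).2
  have hmcyc : collatzOdd^[k] m = m := by
    rw [hm, ← Function.iterate_add_apply, add_comm, Function.iterate_add_apply, hcyc]
  have hmle : ∀ j : ℕ, m ≤ collatzOdd^[j] m := by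
    intro j
    have h1 : collatzOdd^[j] m = collatzOdd^[(j + i0) % k] a := by
      rw [hm, ← Function.iterate_add_apply]
      exact collatz_iter_mod a k hcyc _
    rw [h1]
    exact hi0min _ (Finset.mem_range.mpr (Nat.mod_lt _ hk0))
  have hmne : ∀ i : ℕ, 0 < i → i < k → collatzOdd^[i] m ≠ m := by
    intro i hi hik heq
    apply hmin i hi hik
    have h1 : collatzOdd^[k - i0] (collatzOdd^[i] m) = collatzOdd^[k - i0] m := by rw [heq]
    rw [hm, ← Function.iterate_add_apply, ← Function.iterate_add_apply,
      ← Function.iterate_add_apply] at h1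
    have e1 : k - i0 + i + i0 = i + k := by omega
    have e2 : k - i0 + i0 = k := by omega
    rw [e1, e2, hcyc, Function.iterate_add_apply, hcyc] at h1
    exact h1
  refine ⟨m, hmpos, hmodd, ?_, hmcyc, hmne⟩
  -- the bound
  have hA_pos : ∀ i, 0 < collatzOdd^[i] m := fun i => (collatz_iter_pos m hmpos hmodd i).1
  set N : ℕ := ∑ i ∈ Finset.range k, collatzExp m i with hN
  set P : ℤ := ∏ i ∈ Finset.range k, collatzOdd^[i] m with hP
  have hPpos : 0 < P := Finset.prod_pos (fun i _ => hA_pos i)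
  have hstep : ∀ i, (2:ℤ)^(collatzExp m i) * collatzOdd^[i+1] m = 3 * collatzOdd^[i] m + 1 := by
    intro i
    have h := (collatz_key (collatzOdd^[i] m) (hA_pos i)).1
    rw [Function.iterate_succ_apply']
    simpa [collatzExp] using h
  have hshift : ∏ i ∈ Finset.range k, collatzOdd^[i+1] m = P := by
    have h1 := Finset.prod_range_succ' (fun i => collatzOdd^[i] m) k
    have h2 := Finset.prod_range_succ (fun i => collatzOdd^[i] m) k
    simp only [Function.iterate_zero_apply] at h1
    rw [hmcyc] at h2
    exact mul_right_cancel₀ (ne_of_gt hmpos) (h1.symm.trans h2)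
  have hprod : (2:ℤ)^N * P = ∏ i ∈ Finset.range k, (3 * collatzOdd^[i] m + 1) := by
    rw [hN, ← Finset.prod_pow_eq_pow_sum, ← hshift, ← Finset.prod_mul_distrib]
    exact Finset.prod_congr rfl (fun i _ => hstep i)
  -- 3^k < 2^N
  have h3lt : (3:ℤ)^k < 2^N := by
    have hlt : ∏ i ∈ Finset.range k, ((3:ℤ) * collatzOdd^[i] m)
        < ∏ i ∈ Finset.range k, (3 * collatzOdd^[i] m + 1) := by
      refine Finset.prod_lt_prod_of_nonempty (fun i _ => by linarith [hA_pos i])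
        (fun i _ => by linarith [hA_pos i]) ⟨0, Finset.mem_range.mpr hk0⟩
    have heq : ∏ i ∈ Finset.range k, ((3:ℤ) * collatzOdd^[i] m) = 3^k * P := by
      rw [hP, Finset.prod_mul_distrib, Finset.prod_const, Finset.card_range]
    rw [heq, ← hprod] at hlt
    exact lt_of_mul_lt_mul_right hlt hPpos.le
  -- 3^k + 2 ≤ 2^N
  have h9le : (9:ℤ) ≤ 3^k := by
    calc (9:ℤ) = 3^2 := by norm_num
    _ ≤ 3^k := pow_le_pow_right₀ (by norm_num) hk
  have hN4 : 3 ≤ N := by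
    by_contra h
    push_neg at h
    have h2N : (2:ℤ)^N ≤ 2^3 := pow_le_pow_right₀ (by norm_num) (by omega)
    norm_num at h2N
    linarith
  have h8dvd : (8:ℤ) ∣ 2^N := by
    have : (2:ℤ)^3 ∣ 2^N := pow_dvd_pow 2 hN4
    norm_num at this
    exact this
  have hne : (2:ℤ)^N ≠ 3^k + 1 := by
    intro he
    have h8' : (8:ℤ) ∣ 3^k + 1 := he ▸ h8dvd
    rcases Nat.even_or_odd k with hke | hko
    · obtain ⟨t, ht⟩ := hke
      have h9 : (8:ℤ) ∣ 9^t - 1 := by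
        have h := sub_dvd_pow_sub_pow (9:ℤ) 1 t
        norm_num at h
        exact h
      have h3e : (3:ℤ)^k = 9^t := by
        rw [ht, ← two_mul, pow_mul]; norm_num
      rw [h3e] at h8'
      have h2 : (8:ℤ) ∣ 2 := by
        have := dvd_sub h8' h9
        have he2 : (9:ℤ)^t + 1 - (9^t - 1) = 2 := by ring
        rwa [he2] at this
      norm_num at h2
    · obtain ⟨t, ht⟩ := hko
      have h9 : (8:ℤ) ∣ 3 * (9^t - 1) := Dvd.dvd.mul_left (by
        have h := sub_dvd_pow_sub_pow (9:ℤ) 1 t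
        norm_num at h
        exact h) 3
      have h3e : (3:ℤ)^k = 3 * 9^t := by
        rw [ht, pow_succ, pow_mul]; norm_num; ring
      rw [h3e] at h8'
      have h2 : (8:ℤ) ∣ 4 := by
        have := dvd_sub h8' h9
        have he2 : (3:ℤ) * 9^t + 1 - 3 * (9^t - 1) = 4 := by ring
        rwa [he2] at this
      norm_num at h2
  have hNk : (3:ℤ)^k + 2 ≤ 2^N := by
    have h1 : (3:ℤ)^k + 1 ≤ 2^N := by linarith
    rcases lt_or_eq_of_le h1 with h | h
    · linarith
    · exact absurd h.symm hne
  -- m^k * 2^N ≤ (3m+1)^k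
  have hmain : m^k * 2^N ≤ (3*m+1)^k := by
    have hpt : ∀ i ∈ Finset.range k,
        m * (3 * collatzOdd^[i] m + 1) ≤ (3*m+1) * collatzOdd^[i] m := by
      intro i _
      nlinarith [hmle i, hA_pos i]
    have hprodle : ∏ i ∈ Finset.range k, (m * (3 * collatzOdd^[i] m + 1))
        ≤ ∏ i ∈ Finset.range k, ((3*m+1) * collatzOdd^[i] m) := by
      refine Finset.prod_le_prod (fun i _ => ?_) hpt
      nlinarith [hA_pos i]
    rw [Finset.prod_mul_distrib, Finset.prod_mul_distrib] at hprodle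
    simp only [Finset.prod_const, Finset.card_range] at hprodle
    rw [← hprod, ← hP] at hprodle
    have h2 : m^k * (2^N * P) ≤ (3*m+1)^k * P := hprodle
    have h3 : (m^k * 2^N) * P ≤ (3*m+1)^k * P := by linarith [h2]
    exact le_of_mul_le_mul_right h3 hPpos
  -- conclude
  by_contra hge
  push_neg at hge
  set K : ℤ := (k : ℤ) with hK
  have hK2 : (2:ℤ) ≤ K := by show (2:ℤ) ≤ (k:ℤ); exact_mod_cast hk
  have h31 : (1:ℤ) ≤ 3^(k-1) := by
    have h := pow_le_pow_left₀ (by norm_num : (0:ℤ) ≤ 1) (by norm_num : (1:ℤ) ≤ 3) (k-1)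
    simpa using h
  have h3k : (3:ℤ)^k = 3 * 3^(k-1) := by
    rw [← pow_succ']
    congr 1
    omega
  have hmK : K * 3^(k-1) ≤ m := hge
  have hc : 0 < 3*m - K := by nlinarith
  have hpi := pow_ineq m hmpos.le k
  have hchain : m^k * ((3^k+2) * (3*m - K)) ≤ m^k * (3^k * (3*m)) := by
    calc m^k * ((3^k+2) * (3*m - K)) = (m^k * (3^k+2)) * (3*m-K) := by ring
      _ ≤ (m^k * 2^N) * (3*m-K) :=
          mul_le_mul_of_nonneg_right (mul_le_mul_of_nonneg_left hNk (by positivity)) hc.le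
      _ ≤ (3*m+1)^k * (3*m-K) := mul_le_mul_of_nonneg_right hmain hc.le
      _ ≤ (3*m)^k * (3*m) := hpi
      _ = m^k * (3^k * (3*m)) := by rw [mul_pow]; ring
  have hfin : (3^k+2) * (3*m - K) ≤ 3^k * (3*m) :=
    le_of_mul_le_mul_left hchain (by positivity)
  rw [h3k] at hfin
  have h6 : 6*m ≤ 3*3^(k-1)*K + 2*K := by nlinarith [hfin]
  have hKx : K * 1 ≤ K * 3^(k-1) := mul_le_mul_of_nonneg_left h31 (by linarith)
  have hm6 : 6*(K*3^(k-1)) ≤ 6*m := by linarith [hmK]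
  nlinarith [h6, hKx, hm6, hK2]
end
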